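/- Let (N, ≿) be a Bakers and Millers game with types θ_1, …, θ_t and let d = gcd(|θ_1|, …, |θ_t|). Then: (a) a partition π of N is in the strict core if and only if for every block S ∈ π there is a positive integer k_S with |S ∩ θ_i| = k_S · |θ_i| / d for every i ∈ {1, …, t}; and (b) there exists a partition in the strict core consisting of exactly d blocks, each block S of which satisfies |S ∩ θ_i| = |θ_i| / d for every i; no partition in the strict core has a block of smaller cardinality than these. -/

import Mathlib

open Finset
open scoped Classical

set_option linter.unusedSectionVars false
set_option linter.unusedVariables false
set_option maxHeartbeats 1000000

variable {V : Type*} [Fintype V] [DecidableEq V]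

/-- The utility of player `i` in coalition `S` in the simple symmetric fractional
hedonic game given by the graph `G`: the number of neighbors of `i` in `S`
divided by the size of `S`. -/
noncomputable def util (G : SimpleGraph V) (i : V) (S : Finset V) : ℚ :=
  ((S.filter fun j => G.Adj i j).card : ℚ) / (S.card : ℚ)

/-- A partition of the player set `V`, given by the block `part i` of each player `i`. -/
structure PlayerPartition (V : Type*) [Fintype V] [DecidableEq V] where
  part : V → Finset V
  mem_part : ∀ i, i ∈ part i
  part_eq : ∀ i j, j ∈ part i → part j = part i

/-- A nonempty coalition `S` blocks `π` if every member is strictly better off in `S`. -/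
def Blocks (G : SimpleGraph V) (π : PlayerPartition V) (S : Finset V) : Prop :=
  S.Nonempty ∧ ∀ i ∈ S, util G i (π.part i) < util G i S

/-- A partition is in the core if no nonempty coalition blocks it. -/
def InCore (G : SimpleGraph V) (π : PlayerPartition V) : Prop :=
  ∀ S : Finset V, ¬ Blocks G π S

/-- A nonempty coalition `S` weakly blocks `π` if every member is weakly better off
in `S` and some member is strictly better off. -/
def WeaklyBlocks (G : SimpleGraph V) (π : PlayerPartition V) (S : Finset V) : Prop :=
  S.Nonempty ∧ (∀ i ∈ S, util G i (π.part i) ≤ util G i S) ∧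
    ∃ j ∈ S, util G j (π.part j) < util G j S

/-- A partition is in the strict core if no nonempty coalition weakly blocks it. -/
def InStrictCore (G : SimpleGraph V) (π : PlayerPartition V) : Prop :=
  ∀ S : Finset V, ¬ WeaklyBlocks G π S

/-- The complete multipartite graph of a Bakers and Millers game: the players `V`
are assigned types by `type : V → T`, and distinct players are adjacent iff they
have different types. -/
def bmGraph {V T : Type*} (type : V → T) : SimpleGraph V where
  Adj i j := type i ≠ type j
  symm := ⟨fun _ _ h => Ne.symm h⟩
  loopless := ⟨fun _ h => h rfl⟩

section BM
variable {T : Type*} (type : V → T)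

/-- number of members of `S` of type `t` -/
noncomputable def cnt (S : Finset V) (t : T) : ℕ := (S.filter fun x => type x = t).card

lemma cnt_le_card (S : Finset V) (t : T) : cnt type S t ≤ S.card :=
  card_filter_le _ _

lemma sum_cnt [Fintype T] (S : Finset V) : ∑ t, cnt type S t = S.card :=
  (Finset.card_eq_sum_card_fiberwise (fun x _ => mem_univ (type x))).symm

lemma cnt_pos_of_mem {S : Finset V} {i : V} (hi : i ∈ S) : 0 < cnt type S (type i) :=
  card_pos.2 ⟨i, mem_filter.2 ⟨hi, rfl⟩⟩

lemma util_eq' (i : V) {S : Finset V} (hS : S.Nonempty) :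
    util (bmGraph type) i S = 1 - (cnt type S (type i) : ℚ) / S.card := by
  have h : (S.filter fun j => (bmGraph type).Adj i j) = S.filter fun j => ¬ (type j = type i) := by
    apply filter_congr; intro j _; simp [bmGraph, ne_comm]
  have h2 : (S.filter fun j => ¬ (type j = type i)).card = S.card - cnt type S (type i) := by
    have := card_filter_add_card_filter_not (s := S) (p := fun j => type j = type i)
    unfold cnt; omega
  have hc : (0:ℚ) < S.card := by exact_mod_cast card_pos.2 hS
  have hle : cnt type S (type i) ≤ S.card := cnt_le_card type S (type i)
  rw [util, h, h2, Nat.cast_sub hle]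
  field_simp

lemma util_le_util_iff (i : V) {S S' : Finset V} (hS : S.Nonempty) (hS' : S'.Nonempty) :
    util (bmGraph type) i S ≤ util (bmGraph type) i S' ↔
      (cnt type S' (type i) : ℚ) * S.card ≤ (cnt type S (type i) : ℚ) * S'.card := by
  have hc : (0:ℚ) < S.card := by exact_mod_cast card_pos.2 hS
  have hc' : (0:ℚ) < S'.card := by exact_mod_cast card_pos.2 hS'
  rw [util_eq' type i hS, util_eq' type i hS', sub_le_sub_iff_left, div_le_div_iff₀ hc' hc]

lemma util_lt_util_iff (i : V) {S S' : Finset V} (hS : S.Nonempty) (hS' : S'.Nonempty) :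
    util (bmGraph type) i S < util (bmGraph type) i S' ↔
      (cnt type S' (type i) : ℚ) * S.card < (cnt type S (type i) : ℚ) * S'.card := by
  have hc : (0:ℚ) < S.card := by exact_mod_cast card_pos.2 hS
  have hc' : (0:ℚ) < S'.card := by exact_mod_cast card_pos.2 hS'
  rw [util_eq' type i hS, util_eq' type i hS', sub_lt_sub_iff_left, div_lt_div_iff₀ hc' hc]


lemma part_nonempty (π : PlayerPartition V) (i : V) : (π.part i).Nonempty := ⟨i, π.mem_part i⟩

def InStrictCore' (G : SimpleGraph V) (π : PlayerPartition V) : Prop :=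
  ∀ S : Finset V, ¬ (S.Nonempty ∧ (∀ i ∈ S, util G i (π.part i) ≤ util G i S) ∧
    ∃ j ∈ S, util G j (π.part j) < util G j S)

lemma lemA [Fintype T] (π : PlayerPartition V)
    (h : ∀ i t, (cnt type (π.part i) t) * Fintype.card V
        = cnt type univ t * (π.part i).card) :
    InStrictCore' (bmGraph type) π := by
  rintro S ⟨hSne, hweak, j, hjS, hstrict⟩
  set n := Fintype.card V with hn
  have hScard : (0:ℚ) < S.card := by exact_mod_cast card_pos.2 hSne
  have hn0 : (0:ℚ) < n := by
    have : 0 < n := Fintype.card_pos_iff.2 ⟨hSne.choose⟩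
    exact_mod_cast this
  have key : ∀ t : T, (cnt type S t : ℚ) * n ≤ (cnt type univ t : ℚ) * S.card := by
    intro t
    by_cases h0 : cnt type S t = 0
    · have h00 : (0:ℚ) ≤ (cnt type univ t : ℚ) * S.card := by positivity
      simpa [h0] using h00
    · obtain ⟨i, hi⟩ := card_pos.1 (Nat.pos_of_ne_zero h0)
      obtain ⟨hiS, hit⟩ := mem_filter.1 hi
      subst hit
      have hP := part_nonempty π i
      have hw := (util_le_util_iff type i hP hSne).1 (hweak i hiS)
      have hh := h i (type i)
      have hPcard : (0:ℚ) < (π.part i).card := by exact_mod_cast card_pos.2 hP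
      have hhQ : (cnt type (π.part i) (type i) : ℚ) * n
          = (cnt type univ (type i) : ℚ) * (π.part i).card := by exact_mod_cast hh
      nlinarith [mul_le_mul_of_nonneg_right hw hn0.le, hhQ, hScard, hPcard]
  have keyj : (cnt type S (type j) : ℚ) * n < (cnt type univ (type j) : ℚ) * S.card := by
    have hP := part_nonempty π j
    have hw := (util_lt_util_iff type j hP hSne).1 hstrict
    have hPcard : (0:ℚ) < (π.part j).card := by exact_mod_cast card_pos.2 hP
    have hhQ : (cnt type (π.part j) (type j) : ℚ) * n
        = (cnt type univ (type j) : ℚ) * (π.part j).card := by exact_mod_cast h j (type j)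
    nlinarith [mul_lt_mul_of_pos_right hw hn0, hhQ, hScard, hPcard]
  have hsum : ∑ t : T, (cnt type S t : ℚ) * n < ∑ t : T, (cnt type univ t : ℚ) * S.card :=
    Finset.sum_lt_sum (fun t _ => key t) ⟨type j, mem_univ _, keyj⟩
  have h1 : ∑ t : T, (cnt type S t : ℚ) * n = (S.card : ℚ) * n := by
    rw [← Finset.sum_mul]; congr 1; exact_mod_cast sum_cnt type S
  have h2 : ∑ t : T, (cnt type univ t : ℚ) * S.card = (n : ℚ) * S.card := by
    rw [← Finset.sum_mul]; congr 1
    have := sum_cnt type (univ : Finset V)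
    rw [card_univ] at this; exact_mod_cast this
  rw [h1, h2, mul_comm] at hsum
  exact lt_irrefl _ hsum


lemma mem_part_comm (π : PlayerPartition V) {u j : V} (h : u ∈ π.part j) : j ∈ π.part u := by
  rw [π.part_eq j u h]; exact π.mem_part j

lemma cnt_erase (S : Finset V) (a : V) (ha : a ∈ S) (t : T) :
    cnt type (S.erase a) t = cnt type S t - (if type a = t then 1 else 0) := by
  unfold cnt
  rw [Finset.filter_erase]
  split
  · rename_i h; rw [Finset.card_erase_of_mem (mem_filter.2 ⟨ha, h⟩)]
  · rename_i h
    have ha' : a ∉ S.filter (fun x => type x = t) := fun hm => h (mem_filter.1 hm).2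
    rw [Finset.erase_eq_of_notMem ha']; omega

lemma cnt_insert (S : Finset V) (a : V) (ha : a ∉ S) (t : T) :
    cnt type (insert a S) t = cnt type S t + (if type a = t then 1 else 0) := by
  unfold cnt
  rw [Finset.filter_insert]
  split
  · rw [Finset.card_insert_of_notMem (fun hm => ha (mem_filter.1 hm).1)]
  · omega

/-- Step 1: in a strict core partition, players of the same type have the same
own-type ratio. -/
lemma rho_const (π : PlayerPartition V) (hc : InStrictCore' (bmGraph type) π)
    {i j : V} (hij : type i = type j) :
    (cnt type (π.part i) (type i) : ℚ) * (π.part j).card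
      = (cnt type (π.part j) (type j) : ℚ) * (π.part i).card := by
  -- first prove: not strictly less (ρ(i) < ρ(j) impossible)
  have aux : ∀ i j : V, type i = type j →
      ¬ ((cnt type (π.part i) (type i) : ℚ) * (π.part j).card
          < (cnt type (π.part j) (type j) : ℚ) * (π.part i).card) := by
    clear hij i j
    intro i j hij hlt
    have hPi := part_nonempty π i
    have hPj := part_nonempty π j
    have hne : π.part j ≠ π.part i := by
      intro h; rw [h, hij] at hlt; exact lt_irrefl _ hlt
    have hjPi : j ∉ π.part i := fun h => hne (π.part_eq i j h)
    have hiPi := π.mem_part i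
    set S : Finset V := insert j ((π.part i).erase i) with hS
    have hSne : S.Nonempty := insert_nonempty _ _
    have hScard : S.card = (π.part i).card := by
      rw [hS, Finset.card_insert_of_notMem (fun h => hjPi (Finset.erase_subset _ _ h)),
        Finset.card_erase_of_mem hiPi]
      have : 0 < (π.part i).card := card_pos.2 hPi
      omega
    have hScnt : ∀ t : T, cnt type S t = cnt type (π.part i) t := by
      intro t
      rw [hS, cnt_insert type _ _ (fun h => hjPi (Finset.erase_subset _ _ h)),
        cnt_erase type _ _ hiPi]
      have h1 : (if type j = t then 1 else 0) = (if type i = t then 1 else 0) := by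
        rw [hij]
      rw [h1]
      have : (if type i = t then 1 else 0) ≤ cnt type (π.part i) t := by
        split
        · rename_i h; subst h; exact cnt_pos_of_mem type hiPi
        · omega
      omega
    apply hc S
    refine ⟨hSne, ?_, j, mem_insert_self _ _, ?_⟩
    · intro u huS
      rcases mem_insert.1 huS with rfl | hu
      · -- u = j : strict, hence weak
        apply le_of_lt
        rw [util_lt_util_iff type u hPj hSne, hScnt, hScard]
        rwa [hij] at hlt
      · -- u in part i, same utility
        have hPu : π.part u = π.part i := π.part_eq i u (Finset.erase_subset _ _ hu)
        rw [util_eq' type u (hPu ▸ hPi), util_eq' type u hSne, hPu, hScnt, hScard]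
    · rw [util_lt_util_iff type j hPj hSne, hScnt, hScard]
      rwa [hij] at hlt
  have h1 := aux i j hij
  have h2 := aux j i hij.symm
  push_neg at h1 h2
  exact le_antisymm (by simpa [hij] using h2) (by simpa [hij] using h1)

/-- Step 2: in a strict core partition, every block contains every type. -/
lemma all_types (π : PlayerPartition V) (hc : InStrictCore' (bmGraph type) π)
    (htypes : Function.Surjective type) (i : V) (t : T) :
    0 < cnt type (π.part i) t := by
  by_contra h0
  push_neg at h0
  have h : cnt type (π.part i) t = 0 := Nat.le_zero.1 h0
  obtain ⟨j, rfl⟩ := htypes t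
  have hPi := part_nonempty π i
  have hPj := part_nonempty π j
  have hjPi : j ∉ π.part i := by
    intro hm
    have := cnt_pos_of_mem type hm
    omega
  have hdisj : Disjoint (π.part i) (π.part j) := by
    rw [Finset.disjoint_left]
    intro u hu1 hu2
    have e1 := π.part_eq i u hu1
    have e2 := π.part_eq j u hu2
    exact hjPi (by rw [← e1, e2]; exact π.mem_part j)
  set S : Finset V := π.part i ∪ π.part j with hS
  have hSne : S.Nonempty := hPi.mono Finset.subset_union_left
  have hScard : S.card = (π.part i).card + (π.part j).card :=
    Finset.card_union_of_disjoint hdisj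
  have hScnt : ∀ t' : T, cnt type S t' = cnt type (π.part i) t' + cnt type (π.part j) t' := by
    intro t'
    unfold cnt
    rw [hS, Finset.filter_union,
      Finset.card_union_of_disjoint (Finset.disjoint_filter_filter hdisj)]
  have hc1 : (0:ℚ) < (π.part i).card := by exact_mod_cast card_pos.2 hPi
  have hc2 : (0:ℚ) < (π.part j).card := by exact_mod_cast card_pos.2 hPj
  apply hc S
  refine ⟨hSne, ?_, j, Finset.mem_union_right _ (π.mem_part j), ?_⟩
  · intro u huS
    rcases Finset.mem_union.1 huS with hu | hu
    · have hPu : π.part u = π.part i := π.part_eq i u hu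
      rw [util_le_util_iff type u (hPu ▸ hPi) hSne, hPu, hScnt, hScard]
      push_cast
      have key : (cnt type (π.part j) (type u) : ℚ) * (π.part i).card
          ≤ (cnt type (π.part i) (type u) : ℚ) * (π.part j).card := by
        by_cases h2 : cnt type (π.part j) (type u) = 0
        · rw [h2]; push_cast; rw [zero_mul]; positivity
        · obtain ⟨u', hu'⟩ := Finset.card_pos.1 (Nat.pos_of_ne_zero h2)
          obtain ⟨hu'j, hu't⟩ := mem_filter.1 hu'
          have hq := rho_const type π hc (i := u) (j := u') hu't.symm
          rw [hPu, π.part_eq j u' hu'j, hu't] at hq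
          rw [hq]
      nlinarith [key]
    · have hPu : π.part u = π.part j := π.part_eq j u hu
      rw [util_le_util_iff type u (hPu ▸ hPj) hSne, hPu, hScnt, hScard]
      push_cast
      have key : (cnt type (π.part i) (type u) : ℚ) * (π.part j).card
          ≤ (cnt type (π.part j) (type u) : ℚ) * (π.part i).card := by
        by_cases h2 : cnt type (π.part i) (type u) = 0
        · rw [h2]; push_cast; rw [zero_mul]; positivity
        · obtain ⟨u', hu'⟩ := Finset.card_pos.1 (Nat.pos_of_ne_zero h2)
          obtain ⟨hu'i, hu't⟩ := mem_filter.1 hu'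
          have hq := rho_const type π hc (i := u) (j := u') hu't.symm
          rw [hPu, π.part_eq i u' hu'i, hu't] at hq
          rw [hq]
      nlinarith [key]
  · rw [util_lt_util_iff type j hPj hSne, hScnt, hScard, h]
    push_cast
    have hcj : 0 < cnt type (π.part j) (type j) := cnt_pos_of_mem type (π.mem_part j)
    have hcjQ : (0:ℚ) < cnt type (π.part j) (type j) := by exact_mod_cast hcj
    nlinarith [hcjQ, hc1]


/-- Step 3: in a strict core partition each block is proportional. -/
lemma ratio [Fintype T] (π : PlayerPartition V) (hc : InStrictCore' (bmGraph type) π)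
    (htypes : Function.Surjective type) (i : V) (t : T) :
    (cnt type (π.part i) t : ℚ) * Fintype.card V
      = (cnt type univ t : ℚ) * (π.part i).card := by
  have hcard : ∀ j : V, (0:ℚ) < (π.part j).card := fun j => by
    exact_mod_cast card_pos.2 (part_nonempty π j)
  have hconst : ∀ j : V, (cnt type (π.part j) t : ℚ) * (π.part i).card
      = (cnt type (π.part i) t : ℚ) * (π.part j).card := by
    intro j
    obtain ⟨u, hu⟩ := Finset.card_pos.1 (all_types type π hc htypes j t)
    obtain ⟨u0, hu0⟩ := Finset.card_pos.1 (all_types type π hc htypes i t)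
    obtain ⟨huj, hut⟩ := mem_filter.1 hu
    obtain ⟨hu0i, hu0t⟩ := mem_filter.1 hu0
    have hq := rho_const type π hc (i := u) (j := u0) (hut.trans hu0t.symm)
    rwa [π.part_eq j u huj, π.part_eq i u0 hu0i, hut, hu0t] at hq
  have hsum : ∑ j : V, ((cnt type (π.part j) t : ℚ) / (π.part j).card)
      = (cnt type univ t : ℚ) := by
    have e1 : ∀ j : V, (cnt type (π.part j) t : ℚ) / (π.part j).card
        = ∑ u : V, (if j ∈ π.part u ∧ type u = t then ((π.part u).card : ℚ)⁻¹ else 0) := by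
      intro j
      have hptw : ∀ u : V, (if j ∈ π.part u ∧ type u = t then ((π.part u).card : ℚ)⁻¹ else 0)
          = (if u ∈ π.part j ∧ type u = t then ((π.part j).card : ℚ)⁻¹ else 0) := by
        intro u
        by_cases h1 : u ∈ π.part j
        · have hp := π.part_eq j u h1
          simp [h1, mem_part_comm π h1, hp, π.mem_part j]
        · have h2 : j ∉ π.part u := fun hm => h1 (mem_part_comm π hm)
          simp [h1, h2]
      rw [Finset.sum_congr rfl (fun u _ => hptw u), Finset.sum_ite, Finset.sum_const,
        Finset.sum_const_zero, add_zero]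
      have hfe : (univ.filter fun u => u ∈ π.part j ∧ type u = t)
          = (π.part j).filter fun u => type u = t := by
        ext u; simp [mem_filter]
      rw [hfe, nsmul_eq_mul, div_eq_mul_inv]
      rfl
    rw [Finset.sum_congr rfl (fun j _ => e1 j), Finset.sum_comm]
    have e3 : ∀ u : V, (∑ j : V, if j ∈ π.part u ∧ type u = t then ((π.part u).card : ℚ)⁻¹ else 0)
        = (if type u = t then (1:ℚ) else 0) := by
      intro u
      by_cases ht : type u = t
      · simp only [ht, and_true]
        rw [Finset.sum_ite, Finset.sum_const, Finset.sum_const_zero, add_zero]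
        have hfe : (univ.filter fun j => j ∈ π.part u) = π.part u := by
          ext x; simp
        rw [hfe, nsmul_eq_mul]
        exact mul_inv_cancel₀ (ne_of_gt (hcard u))
      · simp [ht]
    rw [Finset.sum_congr rfl (fun u _ => e3 u), Finset.sum_boole]
    rfl
  have e2 : ∀ j : V, (cnt type (π.part j) t : ℚ) / (π.part j).card
      = (cnt type (π.part i) t : ℚ) / (π.part i).card := by
    intro j
    rw [div_eq_div_iff (ne_of_gt (hcard j)) (ne_of_gt (hcard i))]
    exact hconst j
  rw [Finset.sum_congr rfl (fun j _ => e2 j), Finset.sum_const, card_univ,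
    nsmul_eq_mul] at hsum
  have hpi := hcard i
  field_simp at hsum
  nlinarith [hsum]


lemma count_div_eq (m d r : ℕ) (hm : 0 < m) (hr : r < d) :
    ((Finset.range (m * d)).filter fun v => v / m = r).card = m := by
  have he : ((Finset.range (m * d)).filter fun v => v / m = r)
      = Finset.Ico (r * m) (r * m + m) := by
    ext v
    simp only [mem_filter, mem_range, mem_Ico]
    constructor
    · rintro ⟨hv, rfl⟩
      have h1 := Nat.div_mul_le_self v m
      have h2 := Nat.div_add_mod v m
      have h3 := Nat.mod_lt v hm
      have h0 : m * (v / m) = v / m * m := Nat.mul_comm _ _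
      omega
    · rintro ⟨h1, h2⟩
      have h4 : (r + 1) * m ≤ d * m := Nat.mul_le_mul_right m hr
      have h5 : (r + 1) * m = r * m + m := by ring
      have h6 : d * m = m * d := by ring
      constructor
      · omega
      · exact Nat.div_eq_of_lt_le h1 (by omega)
  rw [he, Nat.card_Ico]
  omega

lemma count_div_eq_fin (N m d r : ℕ) (hN : N = m * d) (hm : 0 < m) (hr : r < d) :
    ((univ : Finset (Fin N)).filter fun v => v.val / m = r).card = m := by
  subst hN
  have key : ((univ : Finset (Fin (m * d))).filter fun v => v.val / m = r).card
      = ((Finset.range (m * d)).filter fun v => v / m = r).card := by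
    apply Finset.card_bij (fun v _ => v.val)
    · intro v hv
      simp only [mem_filter, mem_range]
      exact ⟨v.isLt, (mem_filter.1 hv).2⟩
    · intro a _ b _ hab
      exact Fin.val_injective hab
    · intro b hb
      obtain ⟨hb1, hb2⟩ := mem_filter.1 hb
      rw [mem_range] at hb1
      exact ⟨⟨b, hb1⟩, mem_filter.2 ⟨mem_univ _, hb2⟩, rfl⟩
  rw [key, count_div_eq m d r hm hr]

section Construction
variable [Fintype T]

/-- The index of a player within its own type class. -/
noncomputable def idx (i : V) : ℕ :=
  ((univ.filter fun x => type x = type i).equivFin ⟨i, by simp⟩).val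

lemma idx_lt (i : V) : idx type i < cnt type univ (type i) :=
  ((univ.filter fun x => type x = type i).equivFin ⟨i, by simp⟩).isLt

/-- The block index of a player: its index within its type, divided by the
block size for that type. -/
noncomputable def bfun (d : ℕ) (i : V) : ℕ :=
  idx type i / (cnt type univ (type i) / d)

lemma cnt_bfun_block (d : ℕ) (hd0 : 0 < d)
    (hdd : ∀ t : T, d ∣ cnt type univ t) (htypes : Function.Surjective type)
    (r : ℕ) (hr : r < d) (t : T) :
    cnt type (univ.filter fun j => bfun type d j = r) t = cnt type univ t / d := by
  set m := cnt type univ t / d with hm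
  have hnt : 0 < cnt type univ t := by
    obtain ⟨x, hx⟩ := htypes t
    have := cnt_pos_of_mem type (mem_univ x)
    rwa [hx] at this
  have hmd : m * d = cnt type univ t := Nat.div_mul_cancel (hdd t)
  have hm0 : 0 < m := by
    rcases Nat.eq_zero_or_pos m with h | h
    · rw [h, zero_mul] at hmd; omega
    · exact h
  have hidx : ∀ (x : V) (hx : type x = t),
      idx type x = ((univ.filter fun y => type y = t).equivFin
        ⟨x, by simp [hx]⟩).val := by
    intro x hx
    subst hx
    rfl
  have hbfun : ∀ x : V, type x = t → bfun type d x = idx type x / m := by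
    intro x hx
    unfold bfun
    rw [hx, ← hm]
  have hset : (univ.filter fun j => bfun type d j = r).filter (fun x => type x = t)
      = (univ.filter fun x => type x = t).filter fun x => bfun type d x = r := by
    ext x
    simp only [mem_filter, mem_univ, true_and]
    tauto
  show ((univ.filter fun j => bfun type d j = r).filter fun x => type x = t).card = m
  rw [hset]
  have hfin := count_div_eq_fin (cnt type univ t) m d r hmd.symm hm0 hr
  rw [← hfin]
  set e := (univ.filter fun y => type y = t).equivFin with he
  apply Finset.card_bij (fun x hx => e ⟨x, (Finset.mem_filter.1 hx).1⟩)
  · intro x hx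
    obtain ⟨hx1, hx2⟩ := Finset.mem_filter.1 hx
    have htx : type x = t := (Finset.mem_filter.1 hx1).2
    refine Finset.mem_filter.2 ⟨mem_univ _, ?_⟩
    have h1 : (e ⟨x, hx1⟩).val = idx type x := (hidx x htx).symm
    rw [h1, ← hbfun x htx]
    exact hx2
  · intro a ha b hb hab
    exact congrArg Subtype.val (e.injective hab)
  · intro v hv
    have hv2 := (Finset.mem_filter.1 hv).2
    have hmem := (e.symm v).2
    have htx : type (e.symm v).val = t := (Finset.mem_filter.1 hmem).2
    have heta : ∀ (h : (e.symm v).val ∈ univ.filter fun y => type y = t),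
        (⟨(e.symm v).val, h⟩ : {y // y ∈ univ.filter fun y => type y = t}) = e.symm v :=
      fun h => Subtype.coe_eta _ _
    refine ⟨(e.symm v).val, Finset.mem_filter.2 ⟨hmem, ?_⟩, ?_⟩
    · rw [hbfun _ htx, hidx _ htx, heta, Equiv.apply_symm_apply]
      exact hv2
    · rw [heta, Equiv.apply_symm_apply]

lemma idx_spec (t : T) (x : V) (hx : type x = t)
    (h : x ∈ univ.filter fun y => type y = t) :
    idx type x = ((univ.filter fun y => type y = t).equivFin ⟨x, h⟩).val := by
  subst hx; rfl

lemma bfun_lt (d : ℕ) (hd0 : 0 < d) (hdd : ∀ t : T, d ∣ cnt type univ t) (i : V) :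
    bfun type d i < d := by
  have hnt : 0 < cnt type univ (type i) := cnt_pos_of_mem type (mem_univ i)
  set m := cnt type univ (type i) / d with hm
  have hmd : m * d = cnt type univ (type i) := Nat.div_mul_cancel (hdd _)
  have hm0 : 0 < m := by
    rcases Nat.eq_zero_or_pos m with h | h
    · rw [h, zero_mul] at hmd; omega
    · exact h
  have hil := idx_lt type i
  show idx type i / m < d
  rw [Nat.div_lt_iff_lt_mul hm0]
  have hcomm : d * m = m * d := Nat.mul_comm _ _
  omega

lemma bfun_surj (d : ℕ) (hd0 : 0 < d) (hdd : ∀ t : T, d ∣ cnt type univ t)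
    (r : ℕ) (hr : r < d) (t : T) (ht : 0 < cnt type univ t) :
    ∃ i : V, type i = t ∧ bfun type d i = r := by
  set m := cnt type univ t / d with hm
  have hmd : m * d = cnt type univ t := Nat.div_mul_cancel (hdd t)
  have hm0 : 0 < m := by
    rcases Nat.eq_zero_or_pos m with h | h
    · rw [h, zero_mul] at hmd; omega
    · exact h
  have hlt : r * m < (univ.filter fun y => type y = t).card := by
    have h1 : r * m < d * m := (Nat.mul_lt_mul_right hm0).2 hr
    have h2 : (univ.filter fun y => type y = t).card = cnt type univ t := rfl
    have hcomm : d * m = m * d := Nat.mul_comm _ _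
    omega
  set e := (univ.filter fun y => type y = t).equivFin with he
  set a := e.symm ⟨r * m, hlt⟩ with ha
  have hmem := a.2
  have htx : type a.val = t := (mem_filter.1 hmem).2
  refine ⟨a.val, htx, ?_⟩
  have hidx : idx type a.val = r * m := by
    rw [idx_spec type t a.val htx hmem]
    have heta : (⟨a.val, hmem⟩ : {y // y ∈ univ.filter fun y => type y = t}) = a :=
      Subtype.coe_eta _ _
    rw [heta, ha, Equiv.apply_symm_apply]
  show idx type a.val / (cnt type univ (type a.val) / d) = r
  rw [htx, ← hm, hidx, Nat.mul_div_cancel r hm0]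

lemma exists_good_partition [Nonempty V] (d : ℕ) (hd0 : 0 < d)
    (hdd : ∀ t : T, d ∣ cnt type univ t) (htypes : Function.Surjective type) :
    ∃ π : PlayerPartition V, (∀ (i : V) (t : T), cnt type (π.part i) t = cnt type univ t / d) ∧
      (univ.image π.part).card = d := by
  have hnt : ∀ t : T, 0 < cnt type univ t := by
    intro t
    obtain ⟨x, hx⟩ := htypes t
    have := cnt_pos_of_mem type (mem_univ x)
    rwa [hx] at this
  refine ⟨⟨fun i => univ.filter fun j => bfun type d j = bfun type d i, ?_, ?_⟩, ?_, ?_⟩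
  · intro i; simp
  · intro i j hj
    have hb : bfun type d j = bfun type d i := (mem_filter.1 hj).2
    simp only [hb]
  · intro i t
    exact cnt_bfun_block type d hd0 hdd htypes _ (bfun_lt type d hd0 hdd i) t
  · have himg : univ.image (fun i => univ.filter fun j => bfun type d j = bfun type d i)
        = (Finset.range d).image (fun r => univ.filter fun j => bfun type d j = r) := by
      ext S
      simp only [mem_image, mem_univ, true_and, mem_range]
      constructor
      · rintro ⟨i, rfl⟩
        exact ⟨bfun type d i, bfun_lt type d hd0 hdd i, rfl⟩
      · rintro ⟨r, hr, rfl⟩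
        obtain ⟨i, hit, hib⟩ := bfun_surj type d hd0 hdd r hr
          (type (Classical.arbitrary V)) (hnt _)
        exact ⟨i, by rw [hib]⟩
    rw [himg, Finset.card_image_of_injOn, Finset.card_range]
    intro r hr r' hr' heq
    rw [mem_coe, mem_range] at hr hr'
    obtain ⟨x, hxt, hxb⟩ := bfun_surj type d hd0 hdd r hr
      (type (Classical.arbitrary V)) (hnt _)
    have hx1 : x ∈ univ.filter fun j => bfun type d j = r := by simp [hxb]
    simp only at heq
    rw [heq] at hx1
    have := (mem_filter.1 hx1).2
    omega

end Construction
end BM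


theorem stmt_8' {T : Type*} [Fintype T] [Nonempty V] (type : V → T)
    (htypes : Function.Surjective type)
    (d : ℕ)
    (hd : d = (univ : Finset T).gcd fun t => (univ.filter fun i => type i = t).card) :
    (∀ π : PlayerPartition V,
        InStrictCore' (bmGraph type) π ↔
          ∀ i : V, ∃ k : ℕ, 0 < k ∧ ∀ t : T,
            (((π.part i).filter fun x => type x = t).card : ℚ) =
              (k : ℚ) * ((univ.filter fun x => type x = t).card : ℚ) / (d : ℚ)) ∧
      (∃ π : PlayerPartition V,
          InStrictCore' (bmGraph type) π ∧
            (univ.image π.part).card = d ∧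
            ∀ (i : V) (t : T),
              (((π.part i).filter fun x => type x = t).card : ℚ) =
                ((univ.filter fun x => type x = t).card : ℚ) / (d : ℚ)) ∧
      ∀ π' : PlayerPartition V, InStrictCore' (bmGraph type) π' →
        ∀ i : V, (Fintype.card V : ℚ) / (d : ℚ) ≤ ((π'.part i).card : ℚ) := by
  have hd' : d = (univ : Finset T).gcd fun t => cnt type univ t := hd
  have hnt : ∀ t : T, 0 < cnt type univ t := by
    intro t
    obtain ⟨x, hx⟩ := htypes t
    have := cnt_pos_of_mem type (mem_univ x)
    rwa [hx] at this
  have hdd : ∀ t : T, d ∣ cnt type univ t := fun t => hd' ▸ Finset.gcd_dvd (mem_univ t)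
  have hd0 : 0 < d := by
    rcases Nat.eq_zero_or_pos d with h | h
    · exfalso
      have h1 := hdd (type (Classical.arbitrary V))
      rw [h, zero_dvd_iff] at h1
      have h2 := hnt (type (Classical.arbitrary V))
      omega
    · exact h
  have hdQ : ((d:ℚ)) ≠ 0 := Nat.cast_ne_zero.2 (by omega)
  have hdQ0 : (0:ℚ) < d := by exact_mod_cast hd0
  have hnV : ∑ t : T, cnt type univ t = Fintype.card V := by
    rw [sum_cnt type univ, card_univ]
  have hn0 : 0 < Fintype.card V := Fintype.card_pos
  have hnQ : ((Fintype.card V : ℚ)) ≠ 0 := Nat.cast_ne_zero.2 (by omega)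
  have hntQ : ∑ t : T, (cnt type univ t : ℚ) = Fintype.card V := by exact_mod_cast hnV
  have parta : ∀ π : PlayerPartition V, InStrictCore' (bmGraph type) π ↔
      ∀ i : V, ∃ k : ℕ, 0 < k ∧ ∀ t : T,
        ((cnt type (π.part i) t : ℚ)) = (k:ℚ) * (cnt type univ t : ℚ) / (d:ℚ) := by
    intro π
    constructor
    · intro hc i
      have hrat : ∀ t : T, (cnt type (π.part i) t : ℚ) * Fintype.card V
          = (cnt type univ t : ℚ) * (π.part i).card := fun t => ratio type π hc htypes i t
      have hratN : ∀ t : T, cnt type (π.part i) t * Fintype.card V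
          = cnt type univ t * (π.part i).card := fun t => by exact_mod_cast hrat t
      have hPn : Fintype.card V ∣ (π.part i).card * d := by
        have h1 : (univ : Finset T).gcd (fun t => (π.part i).card * cnt type univ t)
            = (π.part i).card * d := by
          rw [Finset.gcd_mul_left, normalize_eq, ← hd']
        rw [← h1]
        refine Finset.dvd_gcd fun t _ => ?_
        have h2 : (π.part i).card * cnt type univ t
            = cnt type (π.part i) t * Fintype.card V := by
          rw [mul_comm]; exact (hratN t).symm
        rw [h2]
        exact dvd_mul_left _ _
      set k := (π.part i).card * d / Fintype.card V with hk
      have hkn : k * Fintype.card V = (π.part i).card * d := Nat.div_mul_cancel hPn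
      have hP0 : 0 < (π.part i).card := card_pos.2 (part_nonempty π i)
      have hk0 : 0 < k := by
        rcases Nat.eq_zero_or_pos k with h | h
        · rw [h, zero_mul] at hkn
          have := Nat.mul_pos hP0 hd0
          omega
        · exact h
      refine ⟨k, hk0, fun t => ?_⟩
      have hknQ : (k:ℚ) * Fintype.card V = ((π.part i).card : ℚ) * d := by exact_mod_cast hkn
      rw [eq_div_iff hdQ]
      apply mul_right_cancel₀ hnQ
      linear_combination (d:ℚ) * hrat t - (cnt type univ t : ℚ) * hknQ
    · intro hk
      apply lemA type π
      intro i t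
      obtain ⟨k, hk0, hkt⟩ := hk i
      have hcardQ : ((π.part i).card : ℚ) * d = (k:ℚ) * Fintype.card V := by
        have h1 : ((π.part i).card:ℚ) = ∑ t : T, (cnt type (π.part i) t : ℚ) := by
          exact_mod_cast (sum_cnt type (π.part i)).symm
        rw [h1, Finset.sum_congr rfl (fun t _ => hkt t), ← Finset.sum_div, ← Finset.mul_sum,
          hntQ]
        field_simp
      have hQ : (cnt type (π.part i) t : ℚ) * Fintype.card V
          = (cnt type univ t : ℚ) * (π.part i).card := by
        have h2 : ((π.part i).card:ℚ) = (k:ℚ) * Fintype.card V / d := by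
          rw [eq_div_iff hdQ]; exact hcardQ
        rw [hkt t, h2]
        ring
      exact_mod_cast hQ
  refine ⟨parta, ?_, ?_⟩
  · obtain ⟨π0, hcnt0, himg0⟩ := exists_good_partition type d hd0 hdd htypes
    refine ⟨π0, ?_, himg0, ?_⟩
    · apply lemA type π0
      intro i t
      rw [hcnt0 i t]
      have hcard : (π0.part i).card = ∑ t : T, cnt type univ t / d := by
        rw [← sum_cnt type (π0.part i)]
        exact Finset.sum_congr rfl (fun t _ => hcnt0 i t)
      have hnd : Fintype.card V = (∑ t : T, cnt type univ t / d) * d := by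
        rw [Finset.sum_mul, ← hnV]
        exact (Finset.sum_congr rfl fun t _ => Nat.div_mul_cancel (hdd t)).symm
      rw [hcard, hnd]
      have hmd := Nat.div_mul_cancel (hdd t)
      conv_rhs => rw [← hmd]
      ring
    · intro i t
      show (cnt type (π0.part i) t : ℚ) = (cnt type univ t : ℚ) / (d:ℚ)
      rw [hcnt0 i t, eq_div_iff hdQ]
      exact_mod_cast Nat.div_mul_cancel (hdd t)
  · intro π' hc' i
    obtain ⟨k, hk0, hkt⟩ := (parta π').1 hc' i
    have hcardQ : ((π'.part i).card : ℚ) = (k:ℚ) * Fintype.card V / d := by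
      have h1 : ((π'.part i).card:ℚ) = ∑ t : T, (cnt type (π'.part i) t : ℚ) := by
        exact_mod_cast (sum_cnt type (π'.part i)).symm
      rw [h1, Finset.sum_congr rfl (fun t _ => hkt t), ← Finset.sum_div, ← Finset.mul_sum,
        hntQ]
    rw [hcardQ]
    have h1k : (1:ℚ) ≤ (k:ℚ) := by exact_mod_cast hk0
    have h2 : (Fintype.card V:ℚ) ≤ (k:ℚ) * Fintype.card V :=
      le_mul_of_one_le_left (by positivity) h1k
    exact (div_le_div_iff_of_pos_right hdQ0).2 h2

/-- Let `d` be the gcd of the type sizes of a Bakers and Millers game. Then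
(a) a partition is in the strict core iff each of its blocks `S` comes with a
positive integer `k_S` such that `|S ∩ θ_t| = k_S ⬝ |θ_t| / d` for every type `t`;
(b) there is a strict core partition with exactly `d` blocks, each block `S` of
which satisfies `|S ∩ θ_t| = |θ_t| / d` for all `t`, and no strict core partition
has a block of cardinality smaller than these (whose common size is `|V| / d`). -/
theorem stmt_8 {T : Type*} [Fintype T] [Nonempty V] (type : V → T)
    (htypes : Function.Surjective type)
    (d : ℕ)
    (hd : d = (univ : Finset T).gcd fun t => (univ.filter fun i => type i = t).card) :
    (∀ π : PlayerPartition V,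
        InStrictCore (bmGraph type) π ↔
          ∀ i : V, ∃ k : ℕ, 0 < k ∧ ∀ t : T,
            (((π.part i).filter fun x => type x = t).card : ℚ) =
              (k : ℚ) * ((univ.filter fun x => type x = t).card : ℚ) / (d : ℚ)) ∧
      (∃ π : PlayerPartition V,
          InStrictCore (bmGraph type) π ∧
            (univ.image π.part).card = d ∧
            ∀ (i : V) (t : T),
              (((π.part i).filter fun x => type x = t).card : ℚ) =
                ((univ.filter fun x => type x = t).card : ℚ) / (d : ℚ)) ∧
      ∀ π' : PlayerPartition V, InStrictCore (bmGraph type) π' →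
        ∀ i : V, (Fintype.card V : ℚ) / (d : ℚ) ≤ ((π'.part i).card : ℚ) := by
  exact stmt_8' type htypes d hd
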